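/- The value of f at its critical point is of order ln ln n: there exist constants C and N such that for all n ≥ N, |f(k*(n), k*(n))| ≤ C · ln ln n. -/

import Mathlib

open Filter Real

/-- The function `f(k,l)` from the proof of Theorem 1 (with parameter `n`):
`f(k,l) = (k+l+1)·ln n − k·ln k − l·ln l + k + l − ((k+l)²/2)·ln 2 − ((k+l)/2)·ln 2
          − (n−k−l)·(2^{−k} + 2^{−l})`, where `2^{−k} = exp(−k·ln 2)`. -/
noncomputable def f (n : ℕ) (k l : ℝ) : ℝ :=
  (k + l + 1) * Real.log n - k * Real.log k - l * Real.log l + k + l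
    - ((k + l) ^ 2 / 2) * Real.log 2 - ((k + l) / 2) * Real.log 2
    - ((n : ℝ) - k - l) * (Real.exp (-k * Real.log 2) + Real.exp (-l * Real.log 2))

/-- partial derivative of f in the first variable -/
noncomputable def gg (n : ℕ) (k l : ℝ) : ℝ :=
  Real.log n - Real.log k - (k + l) * Real.log 2 - Real.log 2 / 2
    + (Real.exp (-k * Real.log 2) + Real.exp (-l * Real.log 2))
    + ((n : ℝ) - k - l) * Real.log 2 * Real.exp (-k * Real.log 2)

lemma f_comm (n : ℕ) (k l : ℝ) : f n k l = f n l k := by unfold f; ring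

lemma hasDerivAt_exp_neg_mul (k : ℝ) :
    HasDerivAt (fun x : ℝ => Real.exp (-x * Real.log 2))
      (-Real.log 2 * Real.exp (-k * Real.log 2)) k := by
  have h : HasDerivAt (fun x : ℝ => -x * Real.log 2) (-Real.log 2) k := by
    simpa using ((hasDerivAt_id k).neg.mul_const (Real.log 2))
  simpa [mul_comm] using h.exp

lemma hasDerivAt_f1 (n : ℕ) (l : ℝ) {k : ℝ} (hk : 0 < k) :
    HasDerivAt (fun k' => f n k' l) (gg n k l) k := by
  have p1 : HasDerivAt (fun x : ℝ => (x + l + 1) * Real.log n) (Real.log n) k := by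
    simpa using (((hasDerivAt_id k).add_const l).add_const 1).mul_const (Real.log n)
  have p2 : HasDerivAt (fun x : ℝ => x * Real.log x) (Real.log k + 1) k := by
    have := (hasDerivAt_id k).mul (Real.hasDerivAt_log hk.ne')
    exact this.congr_deriv (by simp only [id_eq, one_mul, mul_inv_cancel₀ hk.ne'])
  have p5 : HasDerivAt (fun x : ℝ => ((x + l) ^ 2 / 2) * Real.log 2)
      ((k + l) * Real.log 2) k := by
    have : HasDerivAt (fun x : ℝ => (x + l) ^ 2) (2 * (k + l) ^ 1 * 1) k :=
      ((hasDerivAt_id k).add_const l).pow 2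
    have := (this.div_const 2).mul_const (Real.log 2)
    exact this.congr_deriv (by ring)
  have p6 : HasDerivAt (fun x : ℝ => ((x + l) / 2) * Real.log 2) (Real.log 2 / 2) k := by
    have := (((hasDerivAt_id k).add_const l).div_const 2).mul_const (Real.log 2)
    exact this.congr_deriv (by ring)
  have p7a : HasDerivAt (fun x : ℝ => (n : ℝ) - x - l) (-1) k := by
    simpa using ((hasDerivAt_const k ((n:ℝ))).sub (hasDerivAt_id k)).sub_const l
  have p7b : HasDerivAt (fun x : ℝ => Real.exp (-x * Real.log 2) + Real.exp (-l * Real.log 2))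
      (-Real.log 2 * Real.exp (-k * Real.log 2)) k :=
    (hasDerivAt_exp_neg_mul k).add_const _
  have p7 := p7a.mul p7b
  have H := ((((((p1.sub p2).sub (hasDerivAt_const k (l * Real.log l))).add
      (hasDerivAt_id k)).add_const l).sub p5).sub p6).sub p7
  refine H.congr_deriv ?_
  unfold gg; ring

lemma deriv_f1 (n : ℕ) (l : ℝ) {k : ℝ} (hk : 0 < k) :
    deriv (fun k' => f n k' l) k = gg n k l := (hasDerivAt_f1 n l hk).deriv

lemma deriv_f2 (n : ℕ) (k : ℝ) {l : ℝ} (hl : 0 < l) :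
    deriv (fun l' => f n k l') l = gg n l k := by
  have : (fun l' => f n k l') = fun l' => f n l' k := by
    funext l'; exact f_comm n k l'
  rw [this]; exact deriv_f1 n k hl

/-- the diagonal partial derivative -/
noncomputable def ph (n : ℕ) (k : ℝ) : ℝ :=
  Real.log n - Real.log k - 2 * k * Real.log 2 - Real.log 2 / 2
    + 2 * Real.exp (-k * Real.log 2)
    + ((n : ℝ) - 2 * k) * Real.log 2 * Real.exp (-k * Real.log 2)

lemma gg_diag (n : ℕ) (k : ℝ) : gg n k k = ph n k := by unfold gg ph; ring

lemma hasDerivAt_ph (n : ℕ) {k : ℝ} (hk : 0 < k) :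
    HasDerivAt (ph n)
      (-k⁻¹ - 2 * Real.log 2 - 4 * Real.log 2 * Real.exp (-k * Real.log 2)
        - ((n : ℝ) - 2 * k) * Real.log 2 ^ 2 * Real.exp (-k * Real.log 2)) k := by
  have p2 : HasDerivAt (fun x : ℝ => Real.log x) k⁻¹ k := Real.hasDerivAt_log hk.ne'
  have p3 : HasDerivAt (fun x : ℝ => 2 * x * Real.log 2) (2 * Real.log 2) k := by
    have := ((hasDerivAt_id k).const_mul 2).mul_const (Real.log 2)
    exact this.congr_deriv (by ring)
  have p5 : HasDerivAt (fun x : ℝ => 2 * Real.exp (-x * Real.log 2))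
      (2 * (-Real.log 2 * Real.exp (-k * Real.log 2))) k :=
    (hasDerivAt_exp_neg_mul k).const_mul 2
  have p6a : HasDerivAt (fun x : ℝ => ((n : ℝ) - 2 * x) * Real.log 2) (-2 * Real.log 2) k := by
    have : HasDerivAt (fun x : ℝ => (n : ℝ) - 2 * x) (-2) k := by
      exact ((hasDerivAt_const k ((n:ℝ))).sub ((hasDerivAt_id k).const_mul 2)).congr_deriv (by norm_num)
    simpa using this.mul_const (Real.log 2)
  have p6 := p6a.mul (hasDerivAt_exp_neg_mul k)
  have H := ((((hasDerivAt_const k (Real.log (n:ℝ))).sub p2).sub p3).sub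
      (hasDerivAt_const k (Real.log 2 / 2))).add p5 |>.add p6
  refine H.congr_deriv ?_
  ring

lemma ph_strictAntiOn (n : ℕ) (hn : 3 ≤ n) :
    StrictAntiOn (ph n) (Set.Icc 1 (((n : ℝ) - 1) / 2)) := by
  have hn3 : (3:ℝ) ≤ (n:ℝ) := by exact_mod_cast hn
  apply strictAntiOn_of_deriv_neg (convex_Icc _ _)
  · apply ContinuousOn.mono (s := {x : ℝ | 0 < x})
    · intro x hx
      exact ((hasDerivAt_ph n hx).differentiableAt.continuousAt).continuousWithinAt
    · intro x hx
      simp only [Set.mem_Icc] at hx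
      have : (1:ℝ) ≤ x := hx.1
      simp only [Set.mem_setOf_eq]; linarith
  · intro x hx
    rw [interior_Icc] at hx
    obtain ⟨hx1, hx2⟩ := hx
    have hx0 : 0 < x := by linarith
    rw [(hasDerivAt_ph n hx0).deriv]
    have h1 : 0 < x⁻¹ := inv_pos.mpr hx0
    have h2 : (0:ℝ) < Real.log 2 := Real.log_pos (by norm_num)
    have h3 : 0 < Real.exp (-x * Real.log 2) := Real.exp_pos _
    have h4 : 0 < (n : ℝ) - 2 * x := by linarith
    nlinarith [mul_pos (mul_pos h4 (pow_pos h2 2)) h3, mul_pos (mul_pos h2 h3) (by norm_num : (0:ℝ) < 4)]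

/-- diagonal derivative of f -/
lemma hasDerivAt_fdiag (n : ℕ) {k : ℝ} (hk : 0 < k) :
    HasDerivAt (fun x => f n x x) (2 * ph n k) k := by
  have hfe : (fun x : ℝ => f n x x) = fun x : ℝ =>
      (2 * x + 1) * Real.log n - 2 * (x * Real.log x) + 2 * x - (x ^ 2 * 2) * Real.log 2
        - x * Real.log 2 - ((n : ℝ) - 2 * x) * (2 * Real.exp (-x * Real.log 2)) := by
    funext x; unfold f; ring
  rw [hfe]
  have p1 : HasDerivAt (fun x : ℝ => (2 * x + 1) * Real.log n) (2 * Real.log n) k := by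
    have := (((hasDerivAt_id k).const_mul 2).add_const 1).mul_const (Real.log n)
    exact this.congr_deriv (by ring)
  have p2 : HasDerivAt (fun x : ℝ => x * Real.log x) (Real.log k + 1) k := by
    have := (hasDerivAt_id k).mul (Real.hasDerivAt_log hk.ne')
    exact this.congr_deriv (by simp only [id_eq, one_mul, mul_inv_cancel₀ hk.ne'])
  have p4 : HasDerivAt (fun x : ℝ => (x ^ 2 * 2) * Real.log 2) (4 * k * Real.log 2) k := by
    have : HasDerivAt (fun x : ℝ => x ^ 2) (2 * k ^ 1 * 1) k := (hasDerivAt_id k).pow 2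
    have := (this.mul_const 2).mul_const (Real.log 2)
    exact this.congr_deriv (by ring)
  have p6a : HasDerivAt (fun x : ℝ => (n : ℝ) - 2 * x) (-2) k := by
    exact ((hasDerivAt_const k ((n:ℝ))).sub ((hasDerivAt_id k).const_mul 2)).congr_deriv (by norm_num)
  have p6 := p6a.mul ((hasDerivAt_exp_neg_mul k).const_mul 2)
  have H := ((((p1.sub (p2.const_mul 2)).add ((hasDerivAt_id k).const_mul 2)).sub p4).sub
      ((hasDerivAt_id k).mul_const (Real.log 2))).sub p6
  refine H.congr_deriv ?_
  unfold ph; ring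

/-- The region `R = {(k,l) : k ≥ 1, l ≥ 1, k + l ≤ n − 1}`. -/
def region (n : ℕ) : Set (ℝ × ℝ) :=
  {p : ℝ × ℝ | 1 ≤ p.1 ∧ 1 ≤ p.2 ∧ p.1 + p.2 ≤ (n : ℝ) - 1}

/-- `(k, l)` is a critical point of `f n`: both partial derivatives vanish. -/
def IsCritPt (n : ℕ) (k l : ℝ) : Prop :=
  deriv (fun k' => f n k' l) k = 0 ∧ deriv (fun l' => f n k l') l = 0

lemma crit_iff (n : ℕ) {k l : ℝ} (hk : 0 < k) (hl : 0 < l) :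
    IsCritPt n k l ↔ gg n k l = 0 ∧ gg n l k = 0 := by
  unfold IsCritPt
  rw [deriv_f1 n l hk, deriv_f2 n k hl]

lemma crit_eq_of_region (n : ℕ) {k l : ℝ} (hk : 1 ≤ k) (hl : 1 ≤ l)
    (hsum : k + l ≤ (n : ℝ) - 1) (h1 : gg n k l = 0) (h2 : gg n l k = 0) : k = l := by
  have ha : (0:ℝ) < Real.log 2 := Real.log_pos (by norm_num)
  have hnkl : (1:ℝ) ≤ (n : ℝ) - k - l := by linarith
  rcases lt_trichotomy k l with h | h | h
  · exfalso
    have hlog : Real.log k < Real.log l := Real.log_lt_log (by linarith) h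
    have hexp : Real.exp (-l * Real.log 2) < Real.exp (-k * Real.log 2) :=
      Real.exp_lt_exp.mpr (by nlinarith)
    have hdiff : gg n k l - gg n l k =
        Real.log l - Real.log k + ((n : ℝ) - k - l) * Real.log 2 *
          (Real.exp (-k * Real.log 2) - Real.exp (-l * Real.log 2)) := by
      unfold gg; ring
    rw [h1, h2] at hdiff
    nlinarith [mul_pos (mul_pos (by linarith : (0:ℝ) < (n:ℝ) - k - l) ha)
      (by linarith : (0:ℝ) < Real.exp (-k * Real.log 2) - Real.exp (-l * Real.log 2))]
  · exact h
  · exfalso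
    have hlog : Real.log l < Real.log k := Real.log_lt_log (by linarith) h
    have hexp : Real.exp (-k * Real.log 2) < Real.exp (-l * Real.log 2) :=
      Real.exp_lt_exp.mpr (by nlinarith)
    have hdiff : gg n k l - gg n l k =
        Real.log l - Real.log k + ((n : ℝ) - k - l) * Real.log 2 *
          (Real.exp (-k * Real.log 2) - Real.exp (-l * Real.log 2)) := by
      unfold gg; ring
    rw [h1, h2] at hdiff
    nlinarith [mul_pos (mul_pos (by linarith : (0:ℝ) < (n:ℝ) - k - l) ha)
      (by linarith : (0:ℝ) < Real.exp (-l * Real.log 2) - Real.exp (-k * Real.log 2))]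

open Classical in
noncomputable def kst (n : ℕ) : ℝ :=
  if h : ∃ k, (1 ≤ k ∧ k ≤ ((n:ℝ) - 1) / 2) ∧ ph n k = 0 then h.choose else 1

lemma kst_spec (n : ℕ) (h : ∃ k, (1 ≤ k ∧ k ≤ ((n:ℝ) - 1) / 2) ∧ ph n k = 0) :
    (1 ≤ kst n ∧ kst n ≤ ((n:ℝ) - 1) / 2) ∧ ph n (kst n) = 0 := by
  classical
  rw [kst]
  rw [dif_pos h]
  exact h.choose_spec


section auxarith
variable {L M aa nn k u x : ℝ}

lemma aux_Mle (hM4 : 4 ≤ M) (hM2 : 100 * M ^ 2 ≤ L) : 400 * M ≤ L := by nlinarith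

lemma aux_k1le (ha1 : 0.6931 < aa) (hL0 : 0 < L) (hM0 : 0 < M)
    (hla : Real.log aa ≤ -0.3068) (hL54 : 54 ≤ L) :
    L - M + Real.log aa ≤ 1.443 * L * aa := by
  nlinarith [mul_lt_mul_of_pos_right ha1 hL0]

lemma aux_k2le (ha1 : 0.6931 < aa) (hk0 : 0 < k) (h : k * aa ≤ L + 1) (hL54 : 54 ≤ L) :
    k ≤ 2 * L := by nlinarith [mul_lt_mul_of_pos_right ha1 hk0]

lemma aux_inv1 (hx0 : 0 ≤ x) (hx2 : x ≤ 1/50) : 1 ≤ (1 + 2 * x) * (1 - x) := by nlinarith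

lemma aux_inv2 (hu0 : 0 < u) (hu1 : u ≤ 1/100) : 1 ≤ (1 - u + u ^ 2) * (1 + u) := by nlinarith

lemma aux_s1 (hL54 : 54 ≤ L) (hL2 : 100 * L ^ 2 ≤ nn) (ha1 : 0.6931 < aa) :
    L ≤ 0.015 * (nn * aa) := by nlinarith

lemma aux_s2 (hL54 : 54 ≤ L) (hL2 : 100 * L ^ 2 ≤ nn) (hk : k ≤ 1.443 * L) (hk0 : 0 < k) :
    2 * k * L ≤ 0.03 * nn := by nlinarith

lemma aux_s3 (hL54 : 54 ≤ L) (hL2 : 100 * L ^ 2 ≤ nn) (hk : k ≤ 2 * L) (hk0 : 0 < k) :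
    2 * k * L ≤ 0.05 * nn := by nlinarith

lemma aux_s4 (hL54 : 54 ≤ L) (hL2 : 100 * L ^ 2 ≤ nn) (hk : k ≤ 1.443 * L) (hk0 : 0 < k)
    (ha1 : 0.6931 < aa) : 4 * k * L ≤ 0.09 * (nn * aa) := by nlinarith

end auxarith

set_option maxHeartbeats 4000000 in
lemma main_est (n : ℕ) (hn3 : 3 ≤ n)
    (hM4 : 4 ≤ Real.log (Real.log n))
    (hL54 : 54 ≤ Real.log n)
    (hM2 : 100 * Real.log (Real.log n) ^ 2 ≤ Real.log n)
    (hL2 : 100 * Real.log n ^ 2 ≤ (n : ℝ))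
    (hLn : 4 * Real.log n + 1 ≤ (n : ℝ)) :
    ((1 ≤ kst n ∧ kst n ≤ ((n:ℝ) - 1) / 2) ∧ ph n (kst n) = 0) ∧
    (∀ k, 1 ≤ k → k ≤ ((n:ℝ) - 1) / 2 → ph n k = 0 → k = kst n) ∧
    |f n (kst n) (kst n)| ≤ 6 * Real.log (Real.log n) := by
  have hnn0 : (0:ℝ) < (n:ℝ) := by
    have : (3:ℝ) ≤ (n:ℝ) := by exact_mod_cast hn3
    linarith
  set a : ℝ := Real.log 2 with hadef
  set L : ℝ := Real.log (n:ℝ) with hLdef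
  set M : ℝ := Real.log L with hMdef
  have ha1 : (0.6931:ℝ) < a := by rw [hadef]; linarith [Real.log_two_gt_d9]
  have ha2 : a < 0.6932 := by rw [hadef]; linarith [Real.log_two_lt_d9]
  have ha0 : (0:ℝ) < a := by linarith
  have hla_up : Real.log a ≤ -0.3068 := by
    have := Real.log_le_sub_one_of_pos ha0; linarith
  have hla_lo : (-0.443:ℝ) ≤ Real.log a := by
    have h := Real.log_le_sub_one_of_pos (inv_pos.mpr ha0)
    rw [Real.log_inv] at h
    have hinv : a⁻¹ ≤ 1.443 := by rw [inv_eq_one_div, div_le_iff₀ ha0]; linarith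
    linarith
  have hL0 : (0:ℝ) < L := by linarith
  have hM0 : (0:ℝ) < M := by linarith
  have hMle : 400 * M ≤ L := aux_Mle hM4 hM2
  set x : ℝ := (M - Real.log a) / L with hxdef
  set u : ℝ := 4 * M / L with hudef
  set k1 : ℝ := (L - M + Real.log a) / a with hk1def
  set k2 : ℝ := k1 + u / a with hk2def
  have hx0 : 0 ≤ x := by
    rw [hxdef]; apply div_nonneg (by linarith) (by linarith)
  have hx2 : x ≤ 1/50 := by
    rw [hxdef, div_le_iff₀ hL0]; linarith
  have h1x : (0:ℝ) < 1 - x := by linarith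
  have hk1a : k1 * a = L - M + Real.log a := by
    rw [hk1def]; field_simp
  have hArg : (50:ℝ) ≤ L - M + Real.log a := by linarith
  have hk1ge : (50:ℝ) ≤ k1 := by
    rw [hk1def, le_div_iff₀ ha0]; linarith
  have hk1le : k1 ≤ 1.443 * L := by
    rw [hk1def, div_le_iff₀ ha0]; exact aux_k1le ha1 hL0 hM0 hla_up hL54
  have hu0 : (0:ℝ) < u := by rw [hudef]; exact div_pos (by linarith) hL0
  have huS : u ≤ 1/100 := by rw [hudef, div_le_iff₀ hL0]; linarith
  have hLu : L * u = 4 * M := by rw [hudef]; field_simp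
  have hk2a : k2 * a = L - M + Real.log a + u := by
    rw [hk2def, hk1def]; field_simp
  have hk12 : k1 < k2 := by
    rw [hk2def]; linarith [div_pos hu0 ha0]
  have hk2le : k2 ≤ 2 * L := by
    have h : k2 * a ≤ L + 1 := by rw [hk2a]; linarith
    exact aux_k2le ha1 (by linarith) h hL54
  have hk2b : k2 ≤ ((n:ℝ) - 1) / 2 := by
    rw [le_div_iff₀ (by norm_num : (0:ℝ) < 2)]; linarith
  have hk1b : k1 ≤ ((n:ℝ) - 1) / 2 := by linarith
  have hk1g1 : (1:ℝ) ≤ k1 := by linarith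
  have hk2g1 : (1:ℝ) ≤ k2 := by linarith
  -- exp identities
  have he1 : Real.exp (-k1 * a) = L / ((n:ℝ) * a) := by
    have h1 : -k1 * a = M + -L + -Real.log a := by
      rw [neg_mul, hk1a]; ring
    rw [h1, Real.exp_add, Real.exp_add, Real.exp_neg, Real.exp_neg,
      hMdef, Real.exp_log hL0, hLdef, Real.exp_log hnn0, Real.exp_log ha0]
    field_simp
  have he2 : Real.exp (-k2 * a) = L / ((n:ℝ) * a) * Real.exp (-u) := by
    have h2 : -k2 * a = -k1 * a + -u := by
      rw [neg_mul, neg_mul, hk2a, hk1a]; ring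
    rw [h2, Real.exp_add, he1]
  -- log k1
  have hk1alt : k1 = L * (1 - x) / a := by
    rw [hk1def, hxdef]; field_simp; ring
  have hlogk1 : Real.log k1 = M + Real.log (1 - x) - Real.log a := by
    rw [hk1alt, Real.log_div (mul_pos hL0 h1x).ne' ha0.ne',
      Real.log_mul hL0.ne' h1x.ne', hMdef]
  -- log(1-x) bounds
  have hlx_up : Real.log (1 - x) ≤ -x := by
    have := Real.log_le_sub_one_of_pos h1x; linarith
  have hlx_lo : -2 * x ≤ Real.log (1 - x) := by
    have h := Real.log_le_sub_one_of_pos (inv_pos.mpr h1x)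
    rw [Real.log_inv] at h
    have hinv : (1 - x)⁻¹ ≤ 1 + 2 * x := by
      rw [inv_eq_one_div, div_le_iff₀ h1x]; exact aux_inv1 hx0 hx2
    linarith
  -- exp(-u) bounds
  have heu_lo : 1 - u ≤ Real.exp (-u) := by linarith [Real.add_one_le_exp (-u)]
  have heu_up : Real.exp (-u) ≤ 1 - u + u ^ 2 := by
    have h1 : 1 + u ≤ Real.exp u := by linarith [Real.add_one_le_exp u]
    have h3 : (Real.exp u)⁻¹ ≤ (1 + u)⁻¹ := inv_anti₀ (by linarith) h1
    have h4 : (1 + u)⁻¹ ≤ 1 - u + u ^ 2 := by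
      rw [inv_eq_one_div, div_le_iff₀ (by linarith)]; exact aux_inv2 hu0 huS
    rw [Real.exp_neg]; linarith
  have heu_pos : (0:ℝ) < Real.exp (-u) := Real.exp_pos _
  have heu_le1 : Real.exp (-u) ≤ 1 := by
    calc Real.exp (-u) ≤ Real.exp 0 := Real.exp_le_exp.mpr (by linarith)
    _ = 1 := Real.exp_zero
  -- small terms
  have hna : (0:ℝ) < (n:ℝ) * a := mul_pos hnn0 ha0
  have hs1_up : 2 * (L / ((n:ℝ) * a)) ≤ 0.03 := by
    have h : L / ((n:ℝ) * a) ≤ 0.015 := by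
      rw [div_le_iff₀ hna]; exact aux_s1 hL54 hL2 ha1
    linarith
  have hs1_lo : (0:ℝ) ≤ 2 * (L / ((n:ℝ) * a)) :=
    mul_nonneg (by norm_num) (div_nonneg hL0.le hna.le)
  have hs2_up : 2 * k1 * L / (n:ℝ) ≤ 0.03 := by
    rw [div_le_iff₀ hnn0]; exact aux_s2 hL54 hL2 hk1le (by linarith)
  have hs2_lo : (0:ℝ) ≤ 2 * k1 * L / (n:ℝ) :=
    div_nonneg (mul_nonneg (mul_nonneg (by norm_num) (by linarith : (0:ℝ) ≤ k1)) hL0.le) hnn0.le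
  have hs3_up : 2 * k2 * L / (n:ℝ) ≤ 0.05 := by
    rw [div_le_iff₀ hnn0]; exact aux_s3 hL54 hL2 hk2le (by linarith)
  have hs3_lo : (0:ℝ) ≤ 2 * k2 * L / (n:ℝ) :=
    div_nonneg (mul_nonneg (mul_nonneg (by norm_num) (by linarith : (0:ℝ) ≤ k2)) hL0.le) hnn0.le
  have hs4_up : 4 * k1 * L / ((n:ℝ) * a) ≤ 0.09 := by
    rw [div_le_iff₀ hna]; exact aux_s4 hL54 hL2 hk1le (by linarith) ha1
  have hs4_lo : (0:ℝ) ≤ 4 * k1 * L / ((n:ℝ) * a) :=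
    div_nonneg (mul_nonneg (mul_nonneg (by norm_num) (by linarith : (0:ℝ) ≤ k1)) hL0.le) hna.le
  -- ph value at k1
  have e1 : ph n k1 = 2 * M - Real.log k1 - 2 * Real.log a - a / 2
      + 2 * (L / ((n:ℝ) * a)) - 2 * k1 * L / (n:ℝ) := by
    unfold ph
    rw [← hadef, ← hLdef, he1]
    have expand : ((n:ℝ) - 2 * k1) * a * (L / ((n:ℝ) * a)) = L - 2 * k1 * L / (n:ℝ) := by
      field_simp
    rw [expand]
    linear_combination (-2 : ℝ) * hk1a
  have hph1_pos : 0 < ph n k1 := by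
    rw [e1, hlogk1]; linarith
  have hph1_up : ph n k1 ≤ 2 * M := by
    rw [e1, hlogk1]; linarith
  -- ph value at k2
  have e2 : ph n k2 = L * Real.exp (-u) - L + 2 * M - Real.log k2 - 2 * Real.log a
      - 2 * u - a / 2 + (2 * (L / ((n:ℝ) * a)) - 2 * k2 * L / (n:ℝ)) * Real.exp (-u) := by
    unfold ph
    rw [← hadef, ← hLdef, he2]
    have expand : ((n:ℝ) - 2 * k2) * a * (L / ((n:ℝ) * a) * Real.exp (-u))
        = (L - 2 * k2 * L / (n:ℝ)) * Real.exp (-u) := by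
      field_simp
    rw [expand]
    linear_combination (-2 : ℝ) * hk2a
  have hlogk2_lo : 0 ≤ Real.log k2 := Real.log_nonneg hk2g1
  have hlogk2_up : Real.log k2 ≤ M + 0.7 := by
    have h1 : Real.log k2 ≤ Real.log (2 * L) := Real.log_le_log (by linarith) hk2le
    rw [Real.log_mul (by norm_num) hL0.ne'] at h1
    rw [← hadef] at h1
    linarith [ha2]
  have hLuu : L * u ^ 2 ≤ 0.04 * M := by
    have h : L * u ^ 2 = (L * u) * u := by ring
    rw [h, hLu]; linarith [mul_le_mul_of_nonneg_left huS hM0.le]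
  have hLe_up : L * Real.exp (-u) - L ≤ -4 * M + 0.04 * M := by
    linarith [mul_le_mul_of_nonneg_left heu_up hL0.le, hLu, hLuu]
  have hLe_lo : -4 * M ≤ L * Real.exp (-u) - L := by
    linarith [mul_le_mul_of_nonneg_left heu_lo hL0.le, hLu]
  have hbr_up : (2 * (L / ((n:ℝ) * a)) - 2 * k2 * L / (n:ℝ)) * Real.exp (-u) ≤ 0.03 := by
    linarith [mul_le_mul_of_nonneg_left heu_le1 hs1_lo, hs1_up,
      mul_nonneg hs3_lo heu_pos.le]
  have hbr_lo : (-0.05:ℝ) ≤ (2 * (L / ((n:ℝ) * a)) - 2 * k2 * L / (n:ℝ)) * Real.exp (-u) := by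
    linarith [mul_le_mul_of_nonneg_left heu_le1 hs3_lo, hs3_up,
      mul_nonneg hs1_lo heu_pos.le]
  have hph2_neg : ph n k2 < 0 := by rw [e2]; linarith
  have hph2_lo : -4 * M ≤ ph n k2 := by rw [e2]; linarith
  -- value of f at (k1, k1)
  have e3 : f n k1 k1 = -2 * k1 * Real.log (1 - x) + (M - Real.log a)
      - 2 * (M - Real.log a) / a + 4 * k1 * L / ((n:ℝ) * a) := by
    unfold f
    rw [← hadef, ← hLdef, he1, hlogk1, hk1def, hxdef]
    field_simp
    ring
  have hLx : L * x = M - Real.log a := by rw [hxdef]; field_simp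
  have hk1x_up : k1 * x ≤ 1.443 * (M + 0.443) := by
    linarith [mul_nonneg (by linarith : (0:ℝ) ≤ 1.443 * L - k1) hx0, hLx]
  have hk1x_lo : 0 ≤ k1 * x := mul_nonneg (by linarith) hx0
  have hT1_up : -2 * k1 * Real.log (1 - x) ≤ 4 * (k1 * x) := by
    linarith [mul_le_mul_of_nonneg_left (by linarith [hlx_lo] : -Real.log (1 - x) ≤ 2 * x)
      (by linarith : (0:ℝ) ≤ 2 * k1)]
  have hT1_lo : 0 ≤ -2 * k1 * Real.log (1 - x) := by
    linarith [mul_nonneg (by linarith : (0:ℝ) ≤ 2 * k1)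
      (by linarith [hlx_up] : 0 ≤ -Real.log (1 - x))]
  have hT3_up : 2 * (M - Real.log a) / a ≤ 2.886 * (M + 0.443) := by
    rw [div_le_iff₀ ha0]
    linarith [mul_lt_mul_of_pos_right ha1 (show (0:ℝ) < M + 0.443 by linarith)]
  have hT3_lo : 2.885 * (M + 0.3068) ≤ 2 * (M - Real.log a) / a := by
    rw [le_div_iff₀ ha0]
    linarith [mul_lt_mul_of_pos_right ha2 (show (0:ℝ) < M + 0.3068 by linarith)]
  have hFk1_up : f n k1 k1 ≤ 4.5 * M := by rw [e3]; linarith [hk1x_up]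
  have hFk1_lo : -2.2 * M ≤ f n k1 k1 := by rw [e3]; linarith
  -- root existence via IVT
  have hcont12 : ContinuousOn (ph n) (Set.Icc k1 k2) := by
    intro y hy
    have hy0 : (0:ℝ) < y := by linarith [hy.1]
    exact ((hasDerivAt_ph n hy0).differentiableAt.continuousAt).continuousWithinAt
  have hIVT := intermediate_value_Icc' (le_of_lt hk12) hcont12
  have h0mem : (0:ℝ) ∈ Set.Icc (ph n k2) (ph n k1) := ⟨hph2_neg.le, hph1_pos.le⟩
  obtain ⟨kr, hkrmem, hkr⟩ := hIVT h0mem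
  have hEx : ∃ k, (1 ≤ k ∧ k ≤ ((n:ℝ) - 1) / 2) ∧ ph n k = 0 :=
    ⟨kr, ⟨by linarith [hkrmem.1], by linarith [hkrmem.2]⟩, hkr⟩
  obtain ⟨⟨hks1, hks2⟩, hksph⟩ := kst_spec n hEx
  have hanti := ph_strictAntiOn n hn3
  have huniq : ∀ k, 1 ≤ k → k ≤ ((n:ℝ) - 1) / 2 → ph n k = 0 → k = kst n := by
    intro k hka hkb hk0
    exact hanti.injOn ⟨hka, hkb⟩ ⟨hks1, hks2⟩ (by rw [hk0, hksph])
  have hkst_eq : kst n = kr :=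
    (huniq kr (by linarith [hkrmem.1]) (by linarith [hkrmem.2]) hkr).symm
  have hkst_mem : kst n ∈ Set.Icc k1 k2 := by rw [hkst_eq]; exact hkrmem
  have hkst_gt : k1 < kst n := by
    rcases eq_or_lt_of_le hkst_mem.1 with h | h
    · exfalso; rw [← h] at hksph; linarith [hph1_pos, hksph]
    · exact h
  -- mean value theorem on the diagonal
  have hFcont : ContinuousOn (fun z => f n z z) (Set.Icc k1 (kst n)) := by
    intro y hy
    have hy0 : (0:ℝ) < y := by linarith [hy.1]
    exact ((hasDerivAt_fdiag n hy0).differentiableAt.continuousAt).continuousWithinAt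
  have hFd : ∀ y ∈ Set.Ioo k1 (kst n), HasDerivAt (fun z => f n z z) (2 * ph n y) y :=
    fun y hy => hasDerivAt_fdiag n (by linarith [hy.1])
  obtain ⟨c, hc, hceq⟩ :=
    exists_hasDerivAt_eq_slope (fun z => f n z z) (fun y => 2 * ph n y) hkst_gt hFcont hFd
  have hw0 : kst n - k1 ≠ 0 := ne_of_gt (by linarith)
  have hdiffeq : f n (kst n) (kst n) - f n k1 k1 = 2 * ph n c * (kst n - k1) := by
    rw [hceq, div_mul_cancel₀ _ hw0]
  have hcmem : c ∈ Set.Icc (1:ℝ) (((n:ℝ) - 1) / 2) :=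
    ⟨by linarith [hc.1], by linarith [hc.2, hkst_mem.2, hk2b]⟩
  have hck2 : c < k2 := by linarith [hc.2, hkst_mem.2]
  have hphc_up : ph n c ≤ 2 * M :=
    le_of_lt (lt_of_lt_of_le (hanti ⟨hk1g1, hk1b⟩ hcmem hc.1) hph1_up)
  have hphc_lo : -4 * M ≤ ph n c := by
    have h2 : ph n k2 < ph n c := hanti hcmem ⟨hk2g1, hk2b⟩ hck2
    linarith
  have hw_lo : 0 ≤ kst n - k1 := by linarith
  have hw_up : kst n - k1 ≤ u / a := by
    have := hkst_mem.2; rw [hk2def] at this; linarith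
  have hMu : M * u ≤ 0.04 := by
    rw [hudef, ← mul_div_assoc]
    rw [div_le_iff₀ hL0]; linarith [hM2]
  have hMua : M * (u / a) ≤ 0.06 := by
    have h : M * (u / a) = (M * u) / a := by ring
    rw [h, div_le_iff₀ ha0]; linarith [hMu, ha1]
  have hdiff_up : f n (kst n) (kst n) - f n k1 k1 ≤ 0.5 := by
    rw [hdiffeq]
    linarith [mul_nonneg (by linarith : (0:ℝ) ≤ 2 * M - ph n c) hw_lo,
      mul_nonneg hM0.le (by linarith : (0:ℝ) ≤ u / a - (kst n - k1)), hMua]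
  have hdiff_lo : (-0.6:ℝ) ≤ f n (kst n) (kst n) - f n k1 k1 := by
    rw [hdiffeq]
    linarith [mul_nonneg (by linarith : (0:ℝ) ≤ ph n c + 4 * M) hw_lo,
      mul_nonneg hM0.le (by linarith : (0:ℝ) ≤ u / a - (kst n - k1)), hMua]
  refine ⟨⟨⟨hks1, hks2⟩, hksph⟩, huniq, ?_⟩
  rw [abs_le]
  constructor
  · linarith
  · linarith

lemma hev_conds : ∀ᶠ n : ℕ in atTop, 3 ≤ n ∧ 4 ≤ Real.log (Real.log n) ∧
    54 ≤ Real.log n ∧ 100 * Real.log (Real.log n) ^ 2 ≤ Real.log n ∧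
    100 * Real.log n ^ 2 ≤ (n:ℝ) := by
  have t0 : Tendsto (fun n : ℕ => (n:ℝ)) atTop atTop := tendsto_natCast_atTop_atTop
  have t1 : Tendsto (fun n : ℕ => Real.log n) atTop atTop := Real.tendsto_log_atTop.comp t0
  have t2 : Tendsto (fun n : ℕ => Real.log (Real.log n)) atTop atTop :=
    Real.tendsto_log_atTop.comp t1
  have c1 : ∀ᶠ n : ℕ in atTop, 3 ≤ n := eventually_ge_atTop 3
  have c2 := t2.eventually_ge_atTop 4
  have c3 := t1.eventually_ge_atTop 54
  have h4' : Tendsto (fun y : ℝ => Real.log y ^ 2 / (1 * y + 0)) atTop (nhds 0) :=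
    Real.tendsto_pow_log_div_mul_add_atTop 1 0 2 one_ne_zero
  have c4' : Tendsto (fun n : ℕ => Real.log (Real.log n) ^ 2 / (1 * Real.log n + 0))
      atTop (nhds 0) := h4'.comp t1
  have c5' : Tendsto (fun n : ℕ => Real.log n ^ 2 / (1 * (n:ℝ) + 0)) atTop (nhds 0) :=
    h4'.comp t0
  have c4'' := c4'.eventually_lt_const (show (0:ℝ) < 1/100 by norm_num)
  have c5'' := c5'.eventually_lt_const (show (0:ℝ) < 1/100 by norm_num)
  filter_upwards [c1, c2, c3, c4'', c5''] with n h1 h2 h3 h4 h5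
  have hL0 : (0:ℝ) < Real.log n := by linarith
  have hn0 : (0:ℝ) < (n:ℝ) := by
    have : (3:ℝ) ≤ (n:ℝ) := by exact_mod_cast h1
    linarith
  refine ⟨h1, h2, h3, ?_, ?_⟩
  · rw [div_lt_iff₀ (by linarith : (0:ℝ) < 1 * Real.log n + 0)] at h4; linarith
  · rw [div_lt_iff₀ (by linarith : (0:ℝ) < 1 * (n:ℝ) + 0)] at h5; linarith

/-- The value of `f` at its critical point `(k*(n), k*(n))` (the
unique critical point of `f` in the region `R`, for sufficiently large `n`) is of
order `ln ln n`: `|f(k*(n), k*(n))| ≤ C · ln ln n` for all `n ≥ N`. -/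
theorem f_at_critical_point :
    ∃ (kstar : ℕ → ℝ) (C : ℝ) (N : ℕ), ∀ n : ℕ, N ≤ n →
      ((kstar n, kstar n) ∈ region n ∧ IsCritPt n (kstar n) (kstar n) ∧
        ∀ k l : ℝ, (k, l) ∈ region n → IsCritPt n k l → k = kstar n ∧ l = kstar n) ∧
      |f n (kstar n) (kstar n)| ≤ C * Real.log (Real.log n) := by
  obtain ⟨N, hN⟩ := eventually_atTop.mp hev_conds
  refine ⟨kst, 6, N, fun n hn => ?_⟩
  obtain ⟨hn3, hM4, hL54, hM2, hL2⟩ := hN n hn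
  have hLn : 4 * Real.log n + 1 ≤ (n:ℝ) := by nlinarith [hL54, hL2]
  obtain ⟨⟨⟨hks1, hks2⟩, hksph⟩, huniq, hbound⟩ := main_est n hn3 hM4 hL54 hM2 hL2 hLn
  have hkst0 : (0:ℝ) < kst n := by linarith
  constructor
  · refine ⟨⟨hks1, hks1, by linarith⟩, ?_, ?_⟩
    · exact (crit_iff n hkst0 hkst0).mpr ⟨by rw [gg_diag]; exact hksph,
        by rw [gg_diag]; exact hksph⟩
    · intro k l hreg hcrit
      obtain ⟨hk1, hl1, hsum⟩ := hreg
      have hcrit' := (crit_iff n (by linarith : (0:ℝ) < k) (by linarith : (0:ℝ) < l)).mp hcrit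
      have hkl : k = l := crit_eq_of_region n hk1 hl1 hsum hcrit'.1 hcrit'.2
      have hphk : ph n k = 0 := by rw [← gg_diag]; rw [hkl] at hcrit' ⊢; exact hcrit'.1
      have hkb : k ≤ ((n:ℝ) - 1) / 2 := by rw [hkl] at hsum ⊢; linarith
      have := huniq k hk1 hkb hphk
      exact ⟨this, by rw [← hkl]; exact this⟩
  · exact hbound
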